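/- Let c be a Coxeter element in the Weyl group of an affine root system. The linear functional x_c = ω_c(δ, ·) ∈ V* is fixed by the action of c on V*, and x_c is a negative real scalar multiple of φ_c. -/

import Mathlib

open scoped BigOperators

noncomputable section

/-- A symmetrizable generalized Cartan matrix of affine type, together with the
coefficient vector `dz` of the primitive positive imaginary root `δ` spanning the
(one dimensional) kernel of the associated symmetric bilinear form. -/
structure AffineGCM (n : ℕ) where
  /-- the generalized Cartan matrix -/
  a : Matrix (Fin n) (Fin n) ℤ
  /-- symmetrizing factors -/
  d : Fin n → ℝ
  diag : ∀ i, a i i = 2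
  offdiag : ∀ i j, i ≠ j → a i j ≤ 0
  d_pos : ∀ i, 0 < d i
  symmetrizable : ∀ i j, d i * (a i j : ℝ) = d j * (a j i : ℝ)
  /-- `K` is positive semidefinite (on the real span of the simple roots) -/
  posSemidef : ∀ g : Fin n → ℝ, 0 ≤ ∑ i, ∑ j, g i * g j * (d i * (a i j : ℝ))
  /-- `K` is not positive definite -/
  not_posDef : ∃ g : Fin n → ℝ, g ≠ 0 ∧ ∑ i, ∑ j, g i * g j * (d i * (a i j : ℝ)) = 0
  /-- the restriction of `K` to the span of every proper subset of the simple roots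
  is positive definite -/
  proper_posDef : ∀ J : Finset (Fin n), J ≠ Finset.univ →
    ∀ g : Fin n → ℝ, (∀ i, i ∉ J → g i = 0) → g ≠ 0 →
      0 < ∑ i, ∑ j, g i * g j * (d i * (a i j : ℝ))
  /-- coordinates of the positive imaginary root `δ` in the basis of simple roots -/
  dz : Fin n → ℤ
  dz_pos : ∀ i, 0 < dz i
  /-- `δ` is the imaginary root closest to the origin: its coordinates are coprime -/
  dz_prim : Finset.univ.gcd dz = 1
  /-- `δ` spans the kernel of `K` -/
  dz_ker : ∀ j, ∑ i, (dz i : ℝ) * (d i * (a i j : ℝ)) = 0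

namespace AffineGCM

variable {n : ℕ}

/-- The ambient vector space `V`, with the simple roots as standard basis. -/
abbrev V (n : ℕ) := Fin n → ℂ

/-- the simple root `α i` (the `i`-th standard basis vector) -/
def α (i : Fin n) : V n := Pi.single i 1

/-- a vector is *positive* if it lies in the nonnegative real span of the simple roots -/
def IsPosRoot (v : V n) : Prop := ∀ i, 0 ≤ (v i).re ∧ (v i).im = 0

/-- a vector is *negative* if it lies in the nonpositive real span of the simple roots -/
def IsNegRoot (v : V n) : Prop := ∀ i, (v i).re ≤ 0 ∧ (v i).im = 0

/-- the `g`-orbit of `x`: all `g ^ k • x` for integers `k` -/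
def orbit (g : V n ≃ₗ[ℂ] V n) (x : V n) : Set (V n) := Set.range fun k : ℤ => (g ^ k) x

/-- `U g`: the span of all eigenvectors of `g`, i.e. the direct sum of its eigenspaces -/
def eigSpan (g : V n ≃ₗ[ℂ] V n) : Submodule ℂ (V n) :=
  ⨆ μ : ℂ, Module.End.eigenspace (g : Module.End ℂ (V n)) μ

/-- the span `V_fin` of the simple roots other than `α aff` -/
def Vfin (aff : Fin n) : Submodule ℂ (V n) :=
  Submodule.span ℂ (α '' {i : Fin n | i ≠ aff})

variable (C : AffineGCM n)

/-- the simple coroot `α i ^ ∨ = (d i)⁻¹ • α i` -/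
def coroot (i : Fin n) : V n := ((C.d i : ℂ))⁻¹ • α i

/-- The symmetric bilinear form `K`, determined by `K (coroot i) (α j) = a i j`,
that is, `K (α i) (α j) = d i * a i j`. -/
def K : V n →ₗ[ℂ] V n →ₗ[ℂ] ℂ :=
  LinearMap.mk₂ ℂ
    (fun x y => ∑ i, ∑ j, x i * y j * ((C.d i : ℂ) * (C.a i j : ℂ)))
    (fun x x' y => by
      simp only [Pi.add_apply, add_mul, Finset.sum_add_distrib])
    (fun r x y => by
      simp only [Pi.smul_apply, smul_eq_mul, Finset.mul_sum]
      exact Finset.sum_congr rfl fun i _ => Finset.sum_congr rfl fun j _ => by ring)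
    (fun x y y' => by
      simp only [Pi.add_apply, mul_add, add_mul, Finset.sum_add_distrib])
    (fun r x y => by
      simp only [Pi.smul_apply, smul_eq_mul, Finset.mul_sum]
      exact Finset.sum_congr rfl fun i _ => Finset.sum_congr rfl fun j _ => by ring)

/-- the linear map `v ↦ v - K x v • y`; reflections are special cases -/
def reflMap (x y : V n) : V n →ₗ[ℂ] V n where
  toFun v := v - C.K x v • y
  map_add' u v := by simp only [map_add, add_smul]; abel
  map_smul' r u := by simp only [map_smul, smul_eq_mul, RingHom.id_apply, smul_sub, smul_smul]

lemma reflMap_apply (x y v : V n) : C.reflMap x y v = v - C.K x v • y := rfl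

/-- the simple reflection `s i` as a linear endomorphism -/
def sLin (i : Fin n) : V n →ₗ[ℂ] V n := C.reflMap (C.coroot i) (α i)

lemma K_α_α (i j : Fin n) : C.K (α i) (α j) = (C.d i : ℂ) * (C.a i j : ℂ) := by
  simp [K, α, LinearMap.mk₂_apply, Pi.single_apply, ite_mul, zero_mul,
    Finset.sum_ite_eq', Finset.mem_univ]

lemma K_coroot_α (i j : Fin n) : C.K (C.coroot i) (α j) = (C.a i j : ℂ) := by
  have hd : (C.d i : ℂ) ≠ 0 := by exact_mod_cast ne_of_gt (C.d_pos i)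
  simp only [coroot, map_smul, LinearMap.smul_apply, smul_eq_mul, K_α_α]
  field_simp

lemma sLin_invol (i : Fin n) (v : V n) : C.sLin i (C.sLin i v) = v := by
  have h2 : C.K (C.coroot i) (α i) = 2 := by
    rw [K_coroot_α, C.diag]; norm_num
  simp only [sLin, reflMap_apply, map_sub, map_smul, h2, smul_eq_mul]
  module

/-- the simple reflection `s i` -/
def s (i : Fin n) : V n ≃ₗ[ℂ] V n :=
  LinearEquiv.ofLinear (C.sLin i) (C.sLin i)
    (LinearMap.ext fun v => C.sLin_invol i v) (LinearMap.ext fun v => C.sLin_invol i v)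

/-- the Weyl group `W`, as a subgroup of the group of linear automorphisms of `V` -/
def Wgroup : Subgroup (V n ≃ₗ[ℂ] V n) := Subgroup.closure (Set.range C.s)

/-- the Coxeter element `c = s 1 * s 2 * ⋯ * s n` -/
def cox : V n ≃ₗ[ℂ] V n := (List.ofFn C.s).prod

/-- the positive imaginary root `δ` -/
def δv : V n := fun i => ((C.dz i : ℤ) : ℂ)

/-- the set of real roots: `W`-images of the simple roots -/
def realRoots : Set (V n) := {v | ∃ w ∈ C.Wgroup, ∃ i, w (α i) = v}

/-- the root system `Φ`: real roots together with the imaginary roots `k • δ`, `k ≠ 0` -/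
def Φ : Set (V n) := C.realRoots ∪ {v | ∃ k : ℤ, k ≠ 0 ∧ v = (k : ℂ) • C.δv}

/-- `T→ = {α 1, s 1 α 2, …, s 1 ⋯ s (n-1) α n}` -/
def Tproj : Set (V n) :=
  Set.range fun k : Fin n => ((List.ofFn C.s).take k.val).prod (α k)

/-- `T← = {α n, s n α (n-1), …, s n ⋯ s 2 α 1}` -/
def Tinj : Set (V n) :=
  Set.range fun k : Fin n => ((List.ofFn C.s).reverse.take (n - 1 - k.val)).prod (α k)

/-- `Φ_fin`, the finite root system `Φ ∩ V_fin` -/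
def Φfin (aff : Fin n) : Set (V n) := C.Φ ∩ (Vfin aff : Set (V n))

/-- the root `θ = δ - [δ : α aff] • α aff` of `Φ_fin` -/
def θv (aff : Fin n) : V n := C.δv - ((C.dz aff : ℤ) : ℂ) • α aff

/-- the reflection `t β : v ↦ v - K (β^∨) v • β` in a (real) root `β`,
where `β^∨ = (2 / K β β) • β` -/
def tRefl (β : V n) : V n →ₗ[ℂ] V n := C.reflMap ((2 / C.K β β) • β) β

/-- `c_◁ = s 1 * ⋯ * s (aff - 1)` -/
def cleft (aff : Fin n) : V n →ₗ[ℂ] V n := ((List.ofFn C.sLin).take aff.val).prod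

/-- `c_▷ = s (aff + 1) * ⋯ * s n` -/
def cright (aff : Fin n) : V n →ₗ[ℂ] V n := ((List.ofFn C.sLin).drop (aff.val + 1)).prod

/-- `Υ^fin = Φ_fin ∩ U c` -/
def Υfin (aff : Fin n) : Set (V n) := C.Φfin aff ∩ (eigSpan C.cox : Set (V n))

/-- `B` is a simple system for a set `Θ` of roots: a linearly independent subset of `Θ`
such that every element of `Θ` is a nonnegative or a nonpositive combination of `B`. -/
def IsSimpleSystem (Θ : Set (V n)) (B : Finset (V n)) : Prop :=
  ↑B ⊆ Θ ∧ LinearIndependent ℂ (fun b : B => (b : V n)) ∧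
    ∀ v ∈ Θ, ∃ g : V n → ℝ, ((∀ b ∈ B, 0 ≤ g b) ∨ (∀ b ∈ B, g b ≤ 0)) ∧
      v = ∑ b ∈ B, (g b : ℂ) • b

/-- two roots of `Θ` are connected if they are joined by a chain of roots of `Θ`
that are pairwise non-orthogonal (with respect to `K`) -/
def Connected (Θ : Set (V n)) (x y : V n) : Prop :=
  Relation.ReflTransGen (fun u v => u ∈ Θ ∧ v ∈ Θ ∧ C.K u v ≠ 0) x y

/-- the irreducible component of `x` in `Θ` -/
def component (Θ : Set (V n)) (x : V n) : Set (V n) := {y | y ∈ Θ ∧ C.Connected Θ x y}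

/-- a set of roots is of finite type `A` if it consists exactly of the vectors
`±(β i + β (i+1) + ⋯ + β j)` for a linearly independent family `β 1, …, β k` -/
def IsTypeA (Θ : Set (V n)) : Prop :=
  ∃ (k : ℕ) (β : Fin k → V n), LinearIndependent ℂ β ∧ (∀ i, β i ∈ Θ) ∧
    Θ = {v | ∃ i j : Fin k, i ≤ j ∧
      (v = ∑ l ∈ Finset.Icc i j, β l ∨ v = -∑ l ∈ Finset.Icc i j, β l)}

/-- `Ω = {β 1, t (β 1) (β 2), …, t (β 1) ⋯ t (β (m-1)) (β m)}` for an ordered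
tuple `β` of roots -/
def Ωset {m : ℕ} (β : Fin m → V n) : Set (V n) :=
  Set.range fun j : Fin m => (((List.ofFn fun i => C.tRefl (β i)).take j.val).prod) (β j)

/-- `s i` is initial in a Coxeter element `c` if `c` is the product of a permutation
of all the simple reflections starting with `s i` -/
def IsInitial (i : Fin n) (c : V n ≃ₗ[ℂ] V n) : Prop :=
  ∃ l : List (Fin n), (i :: l).Perm (List.finRange n) ∧ ((i :: l).map C.s).prod = c

/-- `s i` is final in a Coxeter element `c` if `c` is the product of a permutation
of all the simple reflections ending with `s i` -/
def IsFinal (i : Fin n) (c : V n ≃ₗ[ℂ] V n) : Prop :=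
  ∃ l : List (Fin n), (l ++ [i]).Perm (List.finRange n) ∧ ((l ++ [i]).map C.s).prod = c

/-- the skew-symmetric bilinear form `ω_c`, determined by
`ω_c (coroot i) (α j) = a i j` if `i > j`, `= 0` if `i = j`, `= -a i j` if `i < j` -/
def ω : V n →ₗ[ℂ] V n →ₗ[ℂ] ℂ :=
  LinearMap.mk₂ ℂ
    (fun x y => ∑ i, ∑ j, x i * y j *
      ((if j < i then 1 else if i = j then 0 else -1) * ((C.d i : ℂ) * (C.a i j : ℂ))))
    (fun x x' y => by
      simp only [Pi.add_apply, add_mul, Finset.sum_add_distrib])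
    (fun r x y => by
      simp only [Pi.smul_apply, smul_eq_mul, Finset.mul_sum]
      exact Finset.sum_congr rfl fun i _ => Finset.sum_congr rfl fun j _ => by ring)
    (fun x y y' => by
      simp only [Pi.add_apply, mul_add, add_mul, Finset.sum_add_distrib])
    (fun r x y => by
      simp only [Pi.smul_apply, smul_eq_mul, Finset.mul_sum]
      exact Finset.sum_congr rfl fun i _ => Finset.sum_congr rfl fun j _ => by ring)

/-! ### Auxiliary machinery for Lemma 3.5 -/

/-- entries of the matrix of `K`: `B i j = d i * a i j` -/
def Bm (i j : Fin n) : ℂ := (C.d i : ℂ) * (C.a i j : ℂ)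

/-- lower-triangular part of `B` (with halved diagonal `d i`) -/
def Lm (i j : Fin n) : ℂ :=
  if i < j then C.Bm i j else if i = j then (C.d i : ℂ) else 0

/-- the bilinear form with matrix `Lᵀ` -/
def Lam (u v : V n) : ℂ := ∑ i, ∑ j, u i * v j * C.Lm i j

lemma Bm_symm (i j : Fin n) : C.Bm i j = C.Bm j i := by
  have h := C.symmetrizable i j
  unfold Bm
  exact_mod_cast h

lemma Lm_add (i j : Fin n) : C.Lm i j + C.Lm j i = C.Bm i j := by
  rcases lt_trichotomy i j with h | h | h
  · simp [Lm, h, not_lt.mpr h.le, h.ne, h.ne']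
  · subst h
    simp only [Lm, lt_irrefl, if_false, if_pos rfl, Bm, C.diag i]
    push_cast; ring
  · rw [C.Bm_symm]
    simp [Lm, h, not_lt.mpr h.le, h.ne, h.ne']

lemma sign_entry (i j : Fin n) :
    (if j < i then (1 : ℂ) else if i = j then 0 else -1) * C.Bm i j
      = C.Bm i j - 2 * C.Lm i j := by
  have hadd := C.Lm_add i j
  rcases lt_trichotomy i j with h | h | h
  · simp only [Lm, if_pos h] at hadd ⊢
    simp only [if_neg (not_lt.mpr h.le), if_neg h.ne]
    ring
  · subst h
    simp [Lm, Bm, C.diag i]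
    ring
  · simp only [Lm, if_pos h, if_neg (not_lt.mpr h.le), if_neg h.ne']
    ring

lemma K_apply' (u v : V n) :
    C.K u v = ∑ i, ∑ j, u i * v j * C.Bm i j := rfl

lemma omega_apply' (u v : V n) :
    C.ω u v = ∑ i, ∑ j, u i * v j *
      ((if j < i then 1 else if i = j then 0 else -1) * C.Bm i j) := rfl

lemma omega_eq (u v : V n) : C.ω u v = C.K u v - 2 * C.Lam u v := by
  rw [omega_apply', K_apply', Lam, Finset.mul_sum, ← Finset.sum_sub_distrib]
  refine Finset.sum_congr rfl fun i _ => ?_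
  rw [Finset.mul_sum, ← Finset.sum_sub_distrib]
  refine Finset.sum_congr rfl fun j _ => ?_
  rw [C.sign_entry i j]; ring

lemma K_symm (u v : V n) : C.K u v = C.K v u := by
  rw [K_apply', K_apply', Finset.sum_comm]
  exact Finset.sum_congr rfl fun i _ => Finset.sum_congr rfl fun j _ => by
    rw [C.Bm_symm j i]; ring

lemma Lam_swap_add (u v : V n) : C.Lam u v + C.Lam v u = C.K u v := by
  have h : C.Lam v u = ∑ i, ∑ j, u i * v j * C.Lm j i := by
    rw [Lam, Finset.sum_comm]
    exact Finset.sum_congr rfl fun i _ => Finset.sum_congr rfl fun j _ => by ring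
  rw [Lam, h, K_apply', ← Finset.sum_add_distrib]
  refine Finset.sum_congr rfl fun i _ => ?_
  rw [← Finset.sum_add_distrib]
  refine Finset.sum_congr rfl fun j _ => ?_
  rw [← C.Lm_add i j]; ring

lemma omega_skew (u v : V n) : C.ω u v = - C.ω v u := by
  have h1 := C.Lam_swap_add u v
  have h2 := C.K_symm u v
  rw [C.omega_eq u v, C.omega_eq v u]
  linear_combination -h2 - 2 * h1

lemma K_alpha_left (i : Fin n) (v : V n) :
    C.K (α i) v = ∑ j, v j * C.Bm i j := by
  rw [K_apply', Finset.sum_comm]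
  refine Finset.sum_congr rfl fun j _ => ?_
  rw [Finset.sum_eq_single i]
  · simp [α]
  · intro b _ hb; simp [α, Pi.single_apply, hb]
  · simp

lemma K_expand (u v : V n) : C.K u v = ∑ i, u i * C.K (α i) v := by
  rw [K_apply']
  refine Finset.sum_congr rfl fun i _ => ?_
  rw [C.K_alpha_left, Finset.mul_sum]
  exact Finset.sum_congr rfl fun j _ => by ring

lemma K_delta (v : V n) : C.K C.δv v = 0 := by
  rw [K_apply', Finset.sum_comm]
  refine Finset.sum_eq_zero fun j _ => ?_
  have h0 : ∑ i, (C.δv i) * C.Bm i j = 0 := by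
    have h := C.dz_ker j
    have h' : ((∑ i, (C.dz i : ℝ) * (C.d i * (C.a i j : ℝ)) : ℝ) : ℂ) = 0 := by
      rw [h]; norm_num
    rw [← h']
    push_cast [δv, Bm]
    ring
  calc ∑ i, C.δv i * v j * C.Bm i j = v j * ∑ i, C.δv i * C.Bm i j := by
        rw [Finset.mul_sum]; exact Finset.sum_congr rfl fun i _ => by ring
    _ = 0 := by rw [h0, mul_zero]

lemma Lam_sub_smul (u v w : V n) (r : ℂ) :
    C.Lam u (v - r • w) = C.Lam u v - r * C.Lam u w := by
  unfold Lam
  rw [Finset.mul_sum, ← Finset.sum_sub_distrib]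
  refine Finset.sum_congr rfl fun i _ => ?_
  rw [Finset.mul_sum, ← Finset.sum_sub_distrib]
  refine Finset.sum_congr rfl fun j _ => ?_
  simp only [Pi.sub_apply, Pi.smul_apply, smul_eq_mul]
  ring

lemma Lam_add_right (u v w : V n) :
    C.Lam u (v + w) = C.Lam u v + C.Lam u w := by
  unfold Lam
  rw [← Finset.sum_add_distrib]
  refine Finset.sum_congr rfl fun i _ => ?_
  rw [← Finset.sum_add_distrib]
  refine Finset.sum_congr rfl fun j _ => ?_
  simp only [Pi.add_apply]
  ring

lemma Lam_alpha_split (k : ℕ) (hkn : k < n) (u : V n) :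
    C.Lam u (α (⟨k, hkn⟩ : Fin n)) =
      (∑ i ∈ Finset.univ.filter (fun i : Fin n => i.val < k), u i * C.Bm i ⟨k, hkn⟩)
        + u ⟨k, hkn⟩ * (C.d ⟨k, hkn⟩ : ℂ) := by
  set kf : Fin n := ⟨k, hkn⟩ with hkf
  have h1 : C.Lam u (α kf) = ∑ i, u i * C.Lm i kf := by
    unfold Lam
    refine Finset.sum_congr rfl fun i _ => ?_
    rw [Finset.sum_eq_single kf]
    · simp [α]
    · intro b _ hb; simp [α, Pi.single_apply, hb]
    · simp
  rw [h1, ← Finset.sum_filter_add_sum_filter_not Finset.univ (fun i : Fin n => i.val < k)]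
  congr 1
  · refine Finset.sum_congr rfl fun i hi => ?_
    simp only [Finset.mem_filter, Finset.mem_univ, true_and] at hi
    have hi' : i < kf := hi
    rw [Lm, if_pos hi']
  · rw [Finset.sum_eq_single kf]
    · rw [Lm, if_neg (lt_irrefl kf), if_pos rfl]
    · intro b hb hbne
      simp only [Finset.mem_filter, Finset.mem_univ, true_and, not_lt] at hb
      have hnb : ¬ b < kf := fun hlt => absurd hlt (not_lt.mpr hb)
      rw [Lm, if_neg hnb, if_neg hbne, mul_zero]
    · intro h; exact absurd (by simp [hkf]) h

lemma filter_succ (k : ℕ) (hkn : k < n) :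
    Finset.univ.filter (fun i : Fin n => i.val < k + 1) =
      insert (⟨k, hkn⟩ : Fin n) (Finset.univ.filter (fun i : Fin n => i.val < k)) := by
  ext i
  simp [Fin.ext_iff]
  omega

lemma Lam_take (k : ℕ) (hk : k ≤ n) (u v : V n) :
    C.Lam u ((((List.ofFn C.sLin).take k).prod : V n →ₗ[ℂ] V n) v) =
      C.Lam u v - ∑ i ∈ Finset.univ.filter (fun i : Fin n => i.val < k),
        u i * C.K (α i) v := by
  induction k generalizing v with
  | zero => simp
  | succ k ih =>
    have hkn : k < n := hk
    set kf : Fin n := ⟨k, hkn⟩ with hkf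
    have hlen : k < (List.ofFn C.sLin).length := by simp [hkn]
    have htake : ((List.ofFn C.sLin).take (k + 1)).prod =
        ((List.ofFn C.sLin).take k).prod * C.sLin kf := by
      rw [List.prod_take_succ _ k hlen]
      congr 1
      simp [hkf]
    set r := C.K (C.coroot kf) v with hr
    have hs : C.sLin kf v = v - r • α kf := rfl
    rw [htake, Module.End.mul_apply, hs, ih (Nat.le_of_succ_le hk)]
    have hK : ∀ i : Fin n, C.K (α i) (v - r • α kf)
        = C.K (α i) v - r * C.Bm i kf := by
      intro i
      rw [map_sub, map_smul, smul_eq_mul, C.K_α_α]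
      rfl
    have hsum : ∑ i ∈ Finset.univ.filter (fun i : Fin n => i.val < k),
        u i * C.K (α i) (v - r • α kf)
        = (∑ i ∈ Finset.univ.filter (fun i : Fin n => i.val < k), u i * C.K (α i) v)
          - r * ∑ i ∈ Finset.univ.filter (fun i : Fin n => i.val < k), u i * C.Bm i kf := by
      rw [Finset.mul_sum, ← Finset.sum_sub_distrib]
      exact Finset.sum_congr rfl fun i _ => by rw [hK i]; ring
    have hdr : C.K (α kf) v = (C.d kf : ℂ) * r := by
      have hd0 : (C.d kf : ℂ) ≠ 0 := by
        exact_mod_cast ne_of_gt (C.d_pos kf)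
      rw [hr]
      unfold coroot
      rw [map_smul, LinearMap.smul_apply, smul_eq_mul]
      field_simp
    rw [C.Lam_sub_smul, C.Lam_alpha_split k hkn, hsum,
      filter_succ k hkn,
      Finset.sum_insert (by
        simp only [Finset.mem_filter, Finset.mem_univ, true_and, not_lt]
        exact le_rfl), hdr]
    ring

lemma cox_apply' (v : V n) :
    C.cox v = (((List.ofFn C.sLin).prod : V n →ₗ[ℂ] V n)) v := by
  have h := map_list_prod (LinearEquiv.automorphismGroup.toLinearMapMonoidHom
    (R := ℂ) (M := V n)) (List.ofFn C.s)
  have h2 : (List.ofFn C.s).map LinearEquiv.automorphismGroup.toLinearMapMonoidHom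
      = List.ofFn C.sLin := by
    rw [List.map_ofFn]
    rfl
  rw [h2] at h
  show (LinearEquiv.automorphismGroup.toLinearMapMonoidHom C.cox) v = _
  rw [cox, h]

lemma master (u v : V n) : C.Lam u (C.cox v) = C.Lam u v - C.K u v := by
  rw [cox_apply']
  have h := C.Lam_take n le_rfl u v
  have hfull : (List.ofFn C.sLin).take n = List.ofFn C.sLin := by
    rw [List.take_of_length_le (by simp)]
  have hfil : Finset.univ.filter (fun i : Fin n => i.val < n) = Finset.univ := by
    ext i; simp [i.isLt]
  rw [hfull, hfil] at h
  rw [h, ← C.K_expand]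

/-- Lemma 3.5: the functional `x_c = ω_c (δ, ·)` is fixed by `c` and is a negative
scalar multiple of `φ_c = K (γ_c) ·`. -/
theorem xc_fixed_and_negative_multiple {n : ℕ} (C : AffineGCM n) (aff : Fin n)
    (haff : ((Subgroup.closure (C.s '' {j : Fin n | j ≠ aff}) : Subgroup (V n ≃ₗ[ℂ] V n)) : Set (V n ≃ₗ[ℂ] V n)).Finite)
    (γ : V n) (hγ : γ ∈ Vfin aff) (hγ1 : C.cox γ - γ = C.δv) :
    (∀ v : V n, C.ω C.δv (C.cox.symm v) = C.ω C.δv v) ∧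
    (∃ r : ℝ, r < 0 ∧ C.ω C.δv = (r : ℂ) • C.K γ) := by
  constructor
  · intro v
    have hfix : ∀ w : V n, C.ω C.δv (C.cox w) = C.ω C.δv w := by
      intro w
      have m := C.master C.δv w
      have k1 := C.K_delta (C.cox w)
      have k2 := C.K_delta w
      rw [C.omega_eq C.δv (C.cox w), C.omega_eq C.δv w]
      linear_combination k1 + k2 - 2 * m
    have h := hfix (C.cox.symm v)
    rw [LinearEquiv.apply_symm_apply] at h
    exact h.symm
  · refine ⟨-2, by norm_num, ?_⟩
    refine LinearMap.ext fun v => ?_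
    have hc : C.cox γ = C.δv + γ := sub_eq_iff_eq_add.mp hγ1
    have m := C.master v γ
    rw [hc, C.Lam_add_right] at m
    have m' : C.Lam v C.δv = - C.K v γ := by linear_combination m
    have hskew := C.omega_skew C.δv v
    have he := C.omega_eq v C.δv
    have hkd : C.K v C.δv = 0 := by rw [C.K_symm]; exact C.K_delta v
    have hkg : C.K v γ = C.K γ v := C.K_symm v γ
    rw [LinearMap.smul_apply, smul_eq_mul]
    push_cast
    linear_combination hskew - he + 2 * m' - hkd - 2 * hkg


end AffineGCM
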